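/- (Right residuation for ↓) Let y be a state variable not occurring in α or β. For any Kripke model M and assignment g: M,g ⊩ ↓x.β ≤ α iff for every world w ∈ W, the inequality β[y/x] ≤ (y → E(y ∧ α)) holds in (M, g[y↦w]), where E is the global diamond. -/

import Mathlib

inductive Form where
  | prop : ℕ → Form
  | nom : ℕ → Form
  | svar : ℕ → Form
  | bot : Form
  | top : Form
  | neg : Form → Form
  | and : Form → Form → Form
  | or : Form → Form → Form
  | imp : Form → Form → Form
  | box : Form → Form
  | dia : Form → Form
  | atN : ℕ → Form → Form
  | atS : ℕ → Form → Form
  | bind : ℕ → Form → Form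
  | bbox : Form → Form
  | bdia : Form → Form
  | glA : Form → Form
  | glE : Form → Form
  | sall : ℕ → Form → Form
  | sex : ℕ → Form → Form

structure Model (W : Type) where
  R : W → W → Prop
  Vp : ℕ → W → Prop
  Vn : ℕ → W

def upd {W : Type} (g : ℕ → W) (x : ℕ) (w : W) : ℕ → W :=
  fun y => if y = x then w else g y

def sat {W : Type} (M : Model W) : (ℕ → W) → W → Form → Prop
  | _, w, .prop p => M.Vp p w
  | _, w, .nom i => M.Vn i = w
  | g, w, .svar x => g x = w
  | _, _, .bot => False
  | _, _, .top => True
  | g, w, .neg φ => ¬ sat M g w φ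
  | g, w, .and φ ψ => sat M g w φ ∧ sat M g w ψ
  | g, w, .or φ ψ => sat M g w φ ∨ sat M g w ψ
  | g, w, .imp φ ψ => sat M g w φ → sat M g w ψ
  | g, w, .box φ => ∀ v, M.R w v → sat M g v φ
  | g, w, .dia φ => ∃ v, M.R w v ∧ sat M g v φ
  | g, _, .atN i φ => sat M g (M.Vn i) φ
  | g, _, .atS x φ => sat M g (g x) φ
  | g, w, .bind x φ => sat M (upd g x w) w φ
  | g, w, .bbox φ => ∀ v, M.R v w → sat M g v φ
  | g, w, .bdia φ => ∃ v, M.R v w ∧ sat M g v φ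
  | g, _, .glA φ => ∀ v, sat M g v φ
  | g, _, .glE φ => ∃ v, sat M g v φ
  | g, w, .sall x φ => ∀ v, sat M (upd g x v) w φ
  | g, w, .sex x φ => ∃ v, sat M (upd g x v) w φ

/-- The inequality φ ≤ ψ holds in (M,g). -/
def holdsIneq {W : Type} (M : Model W) (g : ℕ → W) (φ ψ : Form) : Prop :=
  ∀ w, sat M g w φ → sat M g w ψ

/-- Frame validity of an inequality. -/
def validIneq {W : Type} (R : W → W → Prop) (φ ψ : Form) : Prop :=
  ∀ (Vp : ℕ → W → Prop) (Vn : ℕ → W) (g : ℕ → W),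
    holdsIneq ⟨R, Vp, Vn⟩ g φ ψ

/-- The state variable `x` occurs in the formula (free or bound). -/
def svarIn (x : ℕ) : Form → Prop
  | .prop _ => False
  | .nom _ => False
  | .svar y => y = x
  | .bot => False
  | .top => False
  | .neg φ => svarIn x φ
  | .and φ ψ => svarIn x φ ∨ svarIn x ψ
  | .or φ ψ => svarIn x φ ∨ svarIn x ψ
  | .imp φ ψ => svarIn x φ ∨ svarIn x ψ
  | .box φ => svarIn x φ
  | .dia φ => svarIn x φ
  | .atN _ φ => svarIn x φ
  | .atS y φ => y = x ∨ svarIn x φ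
  | .bind y φ => y = x ∨ svarIn x φ
  | .bbox φ => svarIn x φ
  | .bdia φ => svarIn x φ
  | .glA φ => svarIn x φ
  | .glE φ => svarIn x φ
  | .sall y φ => y = x ∨ svarIn x φ
  | .sex y φ => y = x ∨ svarIn x φ

/-- Substitution of the state variable `y` for free occurrences of the state variable `x`. -/
def substSvar (x y : ℕ) : Form → Form
  | .prop q => .prop q
  | .nom i => .nom i
  | .svar z => if z = x then .svar y else .svar z
  | .bot => .bot
  | .top => .top
  | .neg φ => .neg (substSvar x y φ)
  | .and φ ψ => .and (substSvar x y φ) (substSvar x y ψ)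
  | .or φ ψ => .or (substSvar x y φ) (substSvar x y ψ)
  | .imp φ ψ => .imp (substSvar x y φ) (substSvar x y ψ)
  | .box φ => .box (substSvar x y φ)
  | .dia φ => .dia (substSvar x y φ)
  | .atN i φ => .atN i (substSvar x y φ)
  | .atS z φ => if z = x then .atS y (substSvar x y φ) else .atS z (substSvar x y φ)
  | .bind z φ => if z = x then .bind z φ else .bind z (substSvar x y φ)
  | .bbox φ => .bbox (substSvar x y φ)
  | .bdia φ => .bdia (substSvar x y φ)
  | .glA φ => .glA (substSvar x y φ)
  | .glE φ => .glE (substSvar x y φ)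
  | .sall z φ => if z = x then .sall z φ else .sall z (substSvar x y φ)
  | .sex z φ => if z = x then .sex z φ else .sex z (substSvar x y φ)

lemma sat_agree {W : Type} (M : Model W) (φ : Form) :
    ∀ (g g' : ℕ → W) (w : W), (∀ z, svarIn z φ → g z = g' z) →
      (sat M g w φ ↔ sat M g' w φ) := by
  induction φ with
  | svar z => intro g g' w h; simp [sat, h z rfl]
  | atS z φ ih => intro g g' w h
                  simp [sat, h z (Or.inl rfl)]
                  exact ih g g' _ (fun z hz => h z (Or.inr hz))
  | bind z φ ih => intro g g' w h
                   simp only [sat]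
                   apply ih
                   intro u hu
                   by_cases hu' : u = z <;> simp [upd, hu']
                   exact h u (Or.inr hu)
  | sall z φ ih => intro g g' w h
                   simp only [sat]
                   refine forall_congr' fun v => ih _ _ _ fun u hu => ?_
                   by_cases hu' : u = z <;> simp [upd, hu']
                   exact h u (Or.inr hu)
  | sex z φ ih => intro g g' w h
                  simp only [sat]
                  refine exists_congr fun v => ih _ _ _ fun u hu => ?_
                  by_cases hu' : u = z <;> simp [upd, hu']
                  exact h u (Or.inr hu)
  | prop p => intro g g' w h; exact Iff.rfl
  | nom i => intro g g' w h; exact Iff.rfl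
  | bot => intro g g' w h; exact Iff.rfl
  | top => intro g g' w h; exact Iff.rfl
  | neg φ ih => intro g g' w h; simp only [sat]; rw [ih g g' w h]
  | and φ ψ ih1 ih2 =>
      intro g g' w h
      simp only [sat]
      rw [ih1 g g' w (fun z hz => h z (Or.inl hz)), ih2 g g' w (fun z hz => h z (Or.inr hz))]
  | or φ ψ ih1 ih2 =>
      intro g g' w h
      simp only [sat]
      rw [ih1 g g' w (fun z hz => h z (Or.inl hz)), ih2 g g' w (fun z hz => h z (Or.inr hz))]
  | imp φ ψ ih1 ih2 =>
      intro g g' w h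
      simp only [sat]
      rw [ih1 g g' w (fun z hz => h z (Or.inl hz)), ih2 g g' w (fun z hz => h z (Or.inr hz))]
  | box φ ih =>
      intro g g' w h
      exact forall_congr' fun v => imp_congr Iff.rfl (ih g g' v h)
  | dia φ ih =>
      intro g g' w h
      exact exists_congr fun v => and_congr Iff.rfl (ih g g' v h)
  | atN i φ ih => intro g g' w h; exact ih g g' _ h
  | bbox φ ih =>
      intro g g' w h
      exact forall_congr' fun v => imp_congr Iff.rfl (ih g g' v h)
  | bdia φ ih =>
      intro g g' w h
      exact exists_congr fun v => and_congr Iff.rfl (ih g g' v h)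
  | glA φ ih =>
      intro g g' w h
      exact forall_congr' fun v => ih g g' v h
  | glE φ ih =>
      intro g g' w h
      exact exists_congr fun v => ih g g' v h

lemma sat_subst {W : Type} (M : Model W) (x y : ℕ) (φ : Form) (hy : ¬ svarIn y φ) :
    ∀ (g : ℕ → W) (w : W),
      sat M g w (substSvar x y φ) ↔ sat M (upd g x (g y)) w φ := by
  induction φ with
  | svar z =>
      intro g w
      by_cases hz : z = x <;> simp [substSvar, sat, upd, hz]
  | atS z φ ih =>
      intro g w
      simp only [svarIn, not_or] at hy
      by_cases hz : z = x <;> simp [substSvar, sat, hz, upd, ih hy.2, Ne.symm hy.1]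
  | bind z φ ih =>
      intro g w
      simp only [svarIn, not_or] at hy
      by_cases hz : z = x
      · subst hz
        simp only [substSvar, if_pos rfl, ↓reduceIte, sat]
        have : upd (upd g z (g y)) z w = upd g z w := by
          funext u; by_cases hu : u = z <;> simp [upd, hu]
        rw [this]
      · simp only [substSvar, if_neg hz, sat]
        rw [ih hy.2]
        have h1 : (upd g z w) y = g y := by simp [upd, Ne.symm hy.1]
        have h2 : upd (upd g z w) x ((upd g z w) y) = upd (upd g x (g y)) z w := by
          funext u
          by_cases hu : u = x <;> by_cases hu' : u = z <;>
            simp_all [upd]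
        rw [h2]
  | sall z φ ih =>
      intro g w
      simp only [svarIn, not_or] at hy
      by_cases hz : z = x
      · subst hz
        simp only [substSvar, if_pos rfl, sat]
        refine forall_congr' fun v => ?_
        have : upd (upd g z (g y)) z v = upd g z v := by
          funext u; by_cases hu : u = z <;> simp [upd, hu]
        rw [this]
      · simp only [substSvar, if_neg hz, sat]
        refine forall_congr' fun v => ?_
        rw [ih hy.2]
        have h2 : upd (upd g z v) x ((upd g z v) y) = upd (upd g x (g y)) z v := by
          funext u
          by_cases hu : u = x <;> by_cases hu' : u = z <;>
            simp_all [upd, Ne.symm hy.1]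
        rw [h2]
  | sex z φ ih =>
      intro g w
      simp only [svarIn, not_or] at hy
      by_cases hz : z = x
      · subst hz
        simp only [substSvar, if_pos rfl, sat]
        refine exists_congr fun v => ?_
        have : upd (upd g z (g y)) z v = upd g z v := by
          funext u; by_cases hu : u = z <;> simp [upd, hu]
        rw [this]
      · simp only [substSvar, if_neg hz, sat]
        refine exists_congr fun v => ?_
        rw [ih hy.2]
        have h2 : upd (upd g z v) x ((upd g z v) y) = upd (upd g x (g y)) z v := by
          funext u
          by_cases hu : u = x <;> by_cases hu' : u = z <;>
            simp_all [upd, Ne.symm hy.1]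
        rw [h2]
  | prop p => intro g w; exact Iff.rfl
  | nom i => intro g w; exact Iff.rfl
  | bot => intro g w; exact Iff.rfl
  | top => intro g w; exact Iff.rfl
  | neg φ ih =>
      intro g w
      simp only [svarIn] at hy
      simp only [substSvar, sat]; rw [ih hy g w]
  | and φ ψ ih1 ih2 =>
      intro g w
      simp only [svarIn, not_or] at hy
      simp only [substSvar, sat]; rw [ih1 hy.1 g w, ih2 hy.2 g w]
  | or φ ψ ih1 ih2 =>
      intro g w
      simp only [svarIn, not_or] at hy
      simp only [substSvar, sat]; rw [ih1 hy.1 g w, ih2 hy.2 g w]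
  | imp φ ψ ih1 ih2 =>
      intro g w
      simp only [svarIn, not_or] at hy
      simp only [substSvar, sat]; rw [ih1 hy.1 g w, ih2 hy.2 g w]
  | box φ ih =>
      intro g w
      simp only [svarIn] at hy
      simp only [substSvar, sat]
      exact forall_congr' fun v => imp_congr Iff.rfl (ih hy g v)
  | dia φ ih =>
      intro g w
      simp only [svarIn] at hy
      simp only [substSvar, sat]
      exact exists_congr fun v => and_congr Iff.rfl (ih hy g v)
  | atN i φ ih =>
      intro g w
      simp only [svarIn] at hy
      exact ih hy g _
  | bbox φ ih =>
      intro g w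
      simp only [svarIn] at hy
      simp only [substSvar, sat]
      exact forall_congr' fun v => imp_congr Iff.rfl (ih hy g v)
  | bdia φ ih =>
      intro g w
      simp only [svarIn] at hy
      simp only [substSvar, sat]
      exact exists_congr fun v => and_congr Iff.rfl (ih hy g v)
  | glA φ ih =>
      intro g w
      simp only [svarIn] at hy
      simp only [substSvar, sat]
      exact forall_congr' fun v => ih hy g v
  | glE φ ih =>
      intro g w
      simp only [svarIn] at hy
      simp only [substSvar, sat]
      exact exists_congr fun v => ih hy g v

theorem right_residuation_downarrow {W : Type} (M : Model W) (g : ℕ → W)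
    (x y : ℕ) (α β : Form) (hyα : ¬ svarIn y α) (hyβ : ¬ svarIn y β) :
    holdsIneq M g (.bind x β) α ↔
      ∀ w : W, holdsIneq M (upd g y w)
        (substSvar x y β) (.imp (.svar y) (.glE (.and (.svar y) α))) := by
  have hup : ∀ (w : W) (z : ℕ), svarIn z β → upd (upd g y w) x w z = upd g x w z := by
    intro w z hz
    by_cases hzx : z = x <;> simp [upd, hzx]
    intro hzy
    exact absurd (hzy ▸ hz) hyβ
  have key : ∀ (w v : W), sat M (upd g y w) v (substSvar x y β) ↔ sat M (upd g x w) v β := by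
    intro w v
    rw [sat_subst M x y β hyβ]
    have : (upd g y w) y = w := by simp [upd]
    rw [this]
    exact sat_agree M β _ _ _ (hup w)
  constructor
  · intro H w v hv hyv
    have hwv : w = v := by simpa [sat, upd] using hyv
    subst hwv
    have hβ : sat M (upd g x w) w β := (key w w).mp hv
    have hα : sat M g w α := H w hβ
    refine ⟨w, ?_, ?_⟩
    · simp [sat, upd]
    · exact (sat_agree M α (upd g y w) g w (fun z hz => by
        simp [upd]; intro hzy; exact absurd (hzy ▸ hz) hyα)).mpr hα
  · intro H w hw
    have h1 : sat M (upd g y w) w (substSvar x y β) := (key w w).mpr hw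
    have h2 := H w w h1 (by simp [sat, upd])
    obtain ⟨u, hu1, hu2⟩ := h2
    have huw : w = u := by simpa [sat, upd] using hu1
    subst huw
    exact (sat_agree M α (upd g y w) g w (fun z hz => by
      simp [upd]; intro hzy; exact absurd (hzy ▸ hz) hyα)).mp hu2
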